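/- Let $R$ be a commutative ring, $X, Y, Z$ be $m \times n$ matrices over $R$, $s_2 \le s_1 \le m$, column indices $a_1 < \dots < a_{s_1+1} \le n$, and $1 \le r \le s_2$. Then the sum $\sum_{u=r}^{s_2} \det(A_u)$, where $A_u$ is the $(s_1+1)\times(s_1+1)$ matrix (columns $a_1,\dots,a_{s_1+1}$) whose rows in order are $X_r, Y_1, \dots, Y_{u-1}, Z_u, X_{u+1}, \dots, X_{s_1}$, lies in the ideal of $R$ generated by the $s_2 \times s_2$ minors of the first $s_2$ rows of $Y$ together with all elements $g_{i_1 j_1, i_2 j_2} = z_{i_1 j_1}(x_{i_2 j_2} - y_{i_2 j_2}) - z_{i_2 j_2}(x_{i_1 j_1} - y_{i_1 j_1})$. -/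

import Mathlib

open Matrix Finset Equiv

section Aux
variable {S : Type*} [CommRing S] {k : ℕ}

private lemma det_eq_sum_rowcol (M : Matrix (Fin k) (Fin k) S) :
    M.det = ∑ σ : Equiv.Perm (Fin k), Equiv.Perm.sign σ • ∏ i, M i (σ i) := by
  rw [← Matrix.det_transpose M, Matrix.det_apply]
  exact Finset.sum_congr rfl fun σ _ => by simp [Matrix.transpose_apply]
private lemma prod_split (M : Matrix (Fin k) (Fin k) S) (p q : Fin k) (hpq : p ≠ q)
    (g : Fin k → Fin k) :
    ∏ i, M i (g i) = M p (g p) * M q (g q) * ∏ i ∈ ({p, q} : Finset (Fin k))ᶜ, M i (g i) := by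
  rw [← Finset.prod_mul_prod_compl ({p, q} : Finset (Fin k)) (fun i => M i (g i)),
    Finset.prod_pair hpq]

lemma det_eq_of_rowpair (M N : Matrix (Fin k) (Fin k) S) (p q : Fin k) (hpq : p ≠ q)
    (hrows : ∀ i, i ≠ p → i ≠ q → M i = N i)
    (h : ∀ c c', M p c * M q c' = N p c * N q c') : M.det = N.det := by
  rw [det_eq_sum_rowcol, det_eq_sum_rowcol]
  refine Finset.sum_congr rfl fun σ _ => ?_
  congr 1
  rw [prod_split M p q hpq, prod_split N p q hpq, h]
  congr 1
  refine Finset.prod_congr rfl fun i hi => ?_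
  simp only [Finset.mem_compl, Finset.mem_insert, Finset.mem_singleton, not_or] at hi
  rw [hrows i hi.1 hi.2]

lemma det_eq_zero_of_rowpair (M : Matrix (Fin k) (Fin k) S) (p q : Fin k) (hpq : p ≠ q)
    (h : ∀ c c', M p c * M q c' = M p c' * M q c) : M.det = 0 := by
  rw [det_eq_sum_rowcol]
  refine Finset.sum_involution (fun σ _ => σ * Equiv.swap p q) (fun σ _ => ?_)
    (fun σ _ _ heq => ?_) (fun σ _ => Finset.mem_univ _) (fun σ _ => ?_)
  · have hsign : Equiv.Perm.sign (σ * Equiv.swap p q) = -Equiv.Perm.sign σ := by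
      simp [Equiv.Perm.sign_swap hpq]
    have happ : ∀ i, (σ * Equiv.swap p q) i = σ (Equiv.swap p q i) := fun i => rfl
    have hprod : ∏ i, M i ((σ * Equiv.swap p q) i) = ∏ i, M i (σ i) := by
      simp only [happ]
      rw [prod_split M p q hpq (fun i => σ (Equiv.swap p q i)), prod_split M p q hpq σ]
      rw [Equiv.swap_apply_left, Equiv.swap_apply_right]
      rw [← h (σ p) (σ q)]
      congr 1
      refine Finset.prod_congr rfl fun i hi => ?_
      simp only [Finset.mem_compl, Finset.mem_insert, Finset.mem_singleton, not_or] at hi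
      rw [Equiv.swap_apply_of_ne_of_ne hi.1 hi.2]
    rw [hprod, hsign]
    simp [add_comm]
  · have h3 : σ q = σ p := by
      conv_rhs => rw [← heq]
      simp [Equiv.Perm.mul_apply]
    exact hpq.symm (σ.injective h3)
  · simp only [mul_assoc, Equiv.swap_mul_self, mul_one]

lemma det_eq_zero_of_rows {t : ℕ} (htk : t < k) (M : Matrix (Fin k) (Fin k) S)
    (yr : Fin t → Fin k → S)
    (hrows : ∀ i : Fin t, M ⟨i.val + 1, by omega⟩ = yr i)
    (hmin : ∀ c : Fin t → Fin k, (Matrix.of fun i j : Fin t => yr i (c j)).det = 0) :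
    M.det = 0 := by
  classical
  set mat : (Fin t → (Fin k → S)) → Matrix (Fin k) (Fin k) S := fun v =>
    Matrix.of fun p q => if h : 1 ≤ p.val ∧ p.val ≤ t then v ⟨p.val - 1, by omega⟩ q else M p q
    with hmat
  have emb_lt : ∀ i : Fin t, i.val + 1 < k := fun i => by omega
  have mat_row : ∀ (v : Fin t → Fin k → S) (i : Fin t), mat v ⟨i.val + 1, emb_lt i⟩ = v i := by
    intro v i
    funext q
    have h : 1 ≤ i.val + 1 ∧ i.val + 1 ≤ t := ⟨by omega, by omega⟩
    simp only [hmat, Matrix.of_apply, dif_pos h]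
    have he : (⟨i.val + 1 - 1, by omega⟩ : Fin t) = i := Fin.ext (by simp)
    rw [he]
  have mat_update : ∀ (inst : DecidableEq (Fin t)) (v : Fin t → Fin k → S) (i : Fin t)
      (x : Fin k → S),
      mat (@Function.update _ _ inst v i x) = (mat v).updateRow ⟨i.val + 1, emb_lt i⟩ x := by
    intro inst v i x
    ext p q
    by_cases h : 1 ≤ p.val ∧ p.val ≤ t
    · have hiff : p = (⟨i.val + 1, emb_lt i⟩ : Fin k) ↔ (⟨p.val - 1, by omega⟩ : Fin t) = i := by
        constructor
        · intro hh
          have hv := congrArg Fin.val hh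
          simp only [] at hv
          exact Fin.ext (by simp [hv])
        · intro hh
          have hv := congrArg Fin.val hh
          simp only [] at hv
          exact Fin.ext (by simp; omega)
      simp only [hmat, Matrix.of_apply, dif_pos h, Matrix.updateRow_apply]
      by_cases hc : p = (⟨i.val + 1, emb_lt i⟩ : Fin k)
      · rw [if_pos hc, hiff.mp hc, Function.update_self]
      · rw [if_neg hc, Function.update_of_ne (fun hh => hc (hiff.mpr hh))]
    · have hne : p ≠ (⟨i.val + 1, emb_lt i⟩ : Fin k) := by
        intro hh
        apply h
        have hv := congrArg Fin.val hh
        simp only [] at hv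
        omega
      rw [Matrix.updateRow_ne hne]
      simp only [hmat, Matrix.of_apply, dif_neg h]
  set G : AlternatingMap S (Fin k → S) S (Fin t) :=
    { toFun := fun v => (mat v).det
      map_update_add' := by
        intro inst v i x y
        simp only [mat_update inst]
        exact Matrix.det_updateRow_add _ _ _ _
      map_update_smul' := by
        intro inst v i c x
        simp only [mat_update inst]
        rw [Matrix.det_updateRow_smul, smul_eq_mul]
      map_eq_zero_of_eq' := by
        intro v i j hv hij
        refine Matrix.det_zero_of_row_eq (i := ⟨i.val + 1, emb_lt i⟩) (j := ⟨j.val + 1, emb_lt j⟩)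
          (fun hh => hij (by
            have hv2 := congrArg Fin.val hh
            simp only [] at hv2
            exact Fin.ext (by omega))) ?_
        rw [mat_row, mat_row, hv] } with hG
  have hMG : M.det = G yr := by
    have hMy : M = mat yr := by
      ext p q
      by_cases h : 1 ≤ p.val ∧ p.val ≤ t
      · simp only [hmat, Matrix.of_apply, dif_pos h]
        have : p = (⟨(⟨p.val - 1, by omega⟩ : Fin t).val + 1, by omega⟩ : Fin k) :=
          Fin.ext (by simp; omega)
        conv_lhs => rw [this]
        rw [show (M ⟨(⟨p.val - 1, by omega⟩ : Fin t).val + 1, by omega⟩ : Fin k → S)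
            = yr ⟨p.val - 1, by omega⟩ from hrows _]
      · simp only [hmat, Matrix.of_apply, dif_neg h]
    conv_lhs => rw [hMy]
    rfl
  have hy : ∀ i : Fin t, yr i = ∑ j : Fin k, yr i j • (Pi.single j 1 : Fin k → S) := by
    intro i
    funext q
    rw [Finset.sum_apply]
    simp [Pi.single_apply, mul_comm]
  rw [hMG]
  have expand : G yr = ∑ d : Fin t → Fin k,
      (∏ i, yr i (d i)) • G (fun i => (Pi.single (d i) 1 : Fin k → S)) := by
    have h1 : G yr = G (fun i => ∑ j : Fin k, yr i j • (Pi.single j 1 : Fin k → S)) := by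
      congr 1
      funext i
      exact hy i
    rw [h1]
    have h2 := G.toMultilinearMap.map_sum
      (fun (i : Fin t) (j : Fin k) => yr i j • (Pi.single j 1 : Fin k → S))
    rw [show (G (fun i => ∑ j : Fin k, yr i j • (Pi.single j 1 : Fin k → S))) =
      G.toMultilinearMap (fun i => ∑ j : Fin k, yr i j • (Pi.single j 1 : Fin k → S)) from rfl, h2]
    refine Finset.sum_congr rfl fun d _ => ?_
    exact G.toMultilinearMap.map_smul_univ (fun i => yr i (d i))
      (fun i => (Pi.single (d i) 1 : Fin k → S))
  rw [expand]
  rw [← Finset.sum_filter_add_sum_filter_not Finset.univ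
    (fun d : Fin t → Fin k => Function.Injective d)]
  have hnoninj : ∑ d ∈ Finset.univ.filter (fun d : Fin t → Fin k => ¬ Function.Injective d),
      (∏ i, yr i (d i)) • G (fun i => (Pi.single (d i) 1 : Fin k → S)) = 0 := by
    refine Finset.sum_eq_zero fun d hd => ?_
    simp only [Finset.mem_filter, Finset.mem_univ, true_and] at hd
    rw [Function.not_injective_iff] at hd
    obtain ⟨i, j, hij, hne⟩ := hd
    have hz : G (fun i => (Pi.single (d i) 1 : Fin k → S)) = 0 :=
      G.map_eq_zero_of_eq _ (by rw [hij]) hne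
    rw [hz, smul_zero]
  rw [hnoninj, add_zero]
  have hmaps : ∀ d ∈ Finset.univ.filter (fun d : Fin t → Fin k => Function.Injective d),
      Finset.univ.image d ∈ Finset.powersetCard t (Finset.univ : Finset (Fin k)) := by
    intro d hd
    simp only [Finset.mem_filter, Finset.mem_univ, true_and] at hd
    rw [Finset.mem_powersetCard_univ, Finset.card_image_of_injective _ hd, Finset.card_univ,
      Fintype.card_fin]
  rw [← Finset.sum_fiberwise_of_maps_to hmaps]
  refine Finset.sum_eq_zero fun s hs => ?_
  have hcard : s.card = t := (Finset.mem_powersetCard_univ).1 hs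
  set c₀ : Fin t → Fin k := fun j => ((s.orderIsoOfFin hcard) j : Fin k) with hc₀
  have hc₀inj : Function.Injective c₀ := fun i j hij =>
    (s.orderIsoOfFin hcard).injective (Subtype.ext hij)
  have hinner : ∑ σ : Equiv.Perm (Fin t),
      (∏ i, yr i (c₀ (σ i))) • G (fun i => (Pi.single (c₀ (σ i)) 1 : Fin k → S)) =
      ∑ d ∈ (Finset.univ.filter fun d : Fin t → Fin k => Function.Injective d).filter
        (fun d => Finset.univ.image d = s),
      (∏ i, yr i (d i)) • G (fun i => (Pi.single (d i) 1 : Fin k → S)) := by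
    refine Finset.sum_bij (fun σ _ => c₀ ∘ σ) ?_ ?_ ?_ ?_
    · intro σ _
      simp only [Finset.mem_filter, Finset.mem_univ, true_and]
      refine ⟨hc₀inj.comp σ.injective, ?_⟩
      apply Finset.ext
      intro x
      constructor
      · intro hx
        obtain ⟨i, _, rfl⟩ := Finset.mem_image.1 hx
        exact ((s.orderIsoOfFin hcard) (σ i)).2
      · intro hx
        obtain ⟨i, hi⟩ := (s.orderIsoOfFin hcard).surjective ⟨x, hx⟩
        refine Finset.mem_image.2 ⟨σ.symm i, Finset.mem_univ _, ?_⟩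
        simp only [Function.comp_apply, Equiv.apply_symm_apply, hc₀, hi]
    · intro σ₁ _ σ₂ _ hh
      ext i
      have := congrFun hh i
      exact congrArg Fin.val (hc₀inj this)
    · intro d hd
      simp only [Finset.mem_filter, Finset.mem_univ, true_and] at hd
      have hmem : ∀ i, d i ∈ s := fun i => hd.2 ▸ Finset.mem_image_of_mem d (Finset.mem_univ i)
      have hinj2 : Function.Injective
          (fun i => (s.orderIsoOfFin hcard).symm ⟨d i, hmem i⟩) := by
        intro i j hij
        have h2 : (⟨d i, hmem i⟩ : {x // x ∈ s}) = ⟨d j, hmem j⟩ :=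
          (s.orderIsoOfFin hcard).symm.injective hij
        exact hd.1 (congrArg Subtype.val h2)
      have hbij := Finite.injective_iff_bijective.1 hinj2
      refine ⟨Equiv.ofBijective _ hbij, Finset.mem_univ _, ?_⟩
      funext i
      show c₀ ((s.orderIsoOfFin hcard).symm ⟨d i, hmem i⟩) = d i
      simp only [hc₀]
      rw [OrderIso.apply_symm_apply]
    · intro σ _
      rfl
  rw [← hinner]
  have hstep : ∀ σ : Equiv.Perm (Fin t),
      (∏ i, yr i (c₀ (σ i))) • G (fun i => (Pi.single (c₀ (σ i)) 1 : Fin k → S))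
      = Equiv.Perm.sign σ • ((∏ i, yr i (c₀ (σ i))) • G (fun i => (Pi.single (c₀ i) 1 : Fin k → S))) := by
    intro σ
    rw [show (fun i => (Pi.single (c₀ (σ i)) 1 : Fin k → S)) = (fun i => (Pi.single (c₀ i) 1 : Fin k → S)) ∘ σ
      from rfl, AlternatingMap.map_perm]
    rw [smul_comm]
  rw [Finset.sum_congr rfl (fun σ _ => hstep σ)]
  have hfact : ∑ σ : Equiv.Perm (Fin t),
      Equiv.Perm.sign σ • ((∏ i, yr i (c₀ (σ i))) • G (fun i => (Pi.single (c₀ i) 1 : Fin k → S)))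
      = (∑ σ : Equiv.Perm (Fin t), Equiv.Perm.sign σ • (∏ i, yr i (c₀ (σ i)))) •
          G (fun i => (Pi.single (c₀ i) 1 : Fin k → S)) := by
    rw [Finset.sum_smul]
    exact Finset.sum_congr rfl fun σ _ => (smul_assoc _ _ _).symm
  rw [hfact]
  have hdet := det_eq_sum_rowcol (Matrix.of fun i j : Fin t => yr i (c₀ j))
  simp only [Matrix.of_apply] at hdet
  have hz : (∑ σ : Equiv.Perm (Fin t), Equiv.Perm.sign σ • (∏ i, yr i (c₀ (σ i)))) = 0 := by
    rw [← hdet]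
    exact hmin c₀
  rw [hz, zero_smul]

end Aux

theorem stmt_7 {R : Type*} [CommRing R] (m n s₁ s₂ r : ℕ)
    (hs₂ : s₂ ≤ s₁) (hm : s₁ ≤ m) (hr1 : 1 ≤ r) (hrs : r ≤ s₂)
    (X Y Z : Matrix (Fin m) (Fin n) R)
    (a : Fin (s₁ + 1) → Fin n) (ha : StrictMono a) :
    (∑ u ∈ Finset.Icc r s₂,
      (Matrix.of fun p q : Fin (s₁ + 1) =>
        if p.val = 0 then X ⟨r - 1, by omega⟩ (a q)
        else if p.val < u then Y ⟨p.val - 1, by omega⟩ (a q)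
        else if p.val = u then Z ⟨p.val - 1, by omega⟩ (a q)
        else X ⟨p.val - 1, by omega⟩ (a q)).det)
    ∈ Ideal.span
        ({ w : R | ∃ c : Fin s₂ → Fin n, StrictMono c ∧
            w = (Matrix.of fun i j : Fin s₂ =>
              Y (Fin.castLE (le_trans hs₂ hm) i) (c j)).det } ∪
         { w : R | ∃ (i₁ i₂ : Fin m) (j₁ j₂ : Fin n),
            w = Z i₁ j₁ * (X i₂ j₂ - Y i₂ j₂) - Z i₂ j₂ * (X i₁ j₁ - Y i₁ j₁) }) := by
  classical
  rw [← Ideal.Quotient.eq_zero_iff_mem]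
  set I : Ideal R := Ideal.span
        ({ w : R | ∃ c : Fin s₂ → Fin n, StrictMono c ∧
            w = (Matrix.of fun i j : Fin s₂ =>
              Y (Fin.castLE (le_trans hs₂ hm) i) (c j)).det } ∪
         { w : R | ∃ (i₁ i₂ : Fin m) (j₁ j₂ : Fin n),
            w = Z i₁ j₁ * (X i₂ j₂ - Y i₂ j₂) - Z i₂ j₂ * (X i₁ j₁ - Y i₁ j₁) }) with hIdef
  set φ : R →+* R ⧸ I := Ideal.Quotient.mk I with hφ
  -- quotient rows
  set xr : ℕ → Fin (s₁ + 1) → R ⧸ I :=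
    fun i q => if h : i < m then φ (X ⟨i, h⟩ (a q)) else 0 with hxr
  set yrow : ℕ → Fin (s₁ + 1) → R ⧸ I :=
    fun i q => if h : i < m then φ (Y ⟨i, h⟩ (a q)) else 0 with hyrow
  set zr : ℕ → Fin (s₁ + 1) → R ⧸ I :=
    fun i q => if h : i < m then φ (Z ⟨i, h⟩ (a q)) else 0 with hzr
  set wr : ℕ → Fin (s₁ + 1) → R ⧸ I := fun i q => xr i q - yrow i q with hwr
  -- Koszul relations in the quotient
  have hK : ∀ i j : ℕ, i < m → j < m → ∀ c c' : Fin (s₁ + 1),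
      zr i c * wr j c' = zr j c' * wr i c := by
    intro i j hi hj c c'
    have hmem : Z ⟨i, hi⟩ (a c) * (X ⟨j, hj⟩ (a c') - Y ⟨j, hj⟩ (a c'))
        - Z ⟨j, hj⟩ (a c') * (X ⟨i, hi⟩ (a c) - Y ⟨i, hi⟩ (a c)) ∈ I := by
      rw [hIdef]
      exact Ideal.subset_span (Set.mem_union_right _ ⟨⟨i, hi⟩, ⟨j, hj⟩, a c, a c', rfl⟩)
    have h0 := (Ideal.Quotient.eq_zero_iff_mem).2 hmem
    rw [show Ideal.Quotient.mk I = φ from rfl] at h0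
    rw [map_sub, _root_.map_mul, _root_.map_mul, map_sub, map_sub, sub_eq_zero] at h0
    simp only [hzr, hwr, hxr, hyrow, dif_pos hi, dif_pos hj]
    exact h0
  -- minors vanish in the quotient
  have hminQ : ∀ c : Fin s₂ → Fin (s₁ + 1),
      (Matrix.of fun i j : Fin s₂ => yrow i.val (c j)).det = 0 := by
    intro c
    have hm2 : ∀ i : Fin s₂, (i.val : ℕ) < m := fun i => by omega
    have hrw : (Matrix.of fun i j : Fin s₂ => yrow i.val (c j)) =
        (Matrix.of fun i j : Fin s₂ => Y ⟨i.val, hm2 i⟩ (a (c j))).map φ := by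
      ext i j
      simp only [Matrix.of_apply, Matrix.map_apply, hyrow, dif_pos (hm2 i)]
    have hmapdet := RingHom.map_det φ (Matrix.of fun i j : Fin s₂ => Y ⟨i.val, hm2 i⟩ (a (c j)))
    rw [RingHom.mapMatrix_apply] at hmapdet
    rw [hrw, ← hmapdet]
    rw [show φ = Ideal.Quotient.mk I from rfl, Ideal.Quotient.eq_zero_iff_mem]
    by_cases hcinj : Function.Injective c
    · set s : Finset (Fin (s₁ + 1)) := Finset.univ.image c with hsdef
      have hcard : s.card = s₂ := by
        rw [hsdef, Finset.card_image_of_injective _ hcinj, Finset.card_univ, Fintype.card_fin]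
      set c₁ : Fin s₂ → Fin (s₁ + 1) := fun j => ((s.orderIsoOfFin hcard) j : Fin (s₁ + 1))
        with hc₁
      have hc₁mono : StrictMono c₁ := fun i j hij =>
        Subtype.coe_lt_coe.2 ((s.orderIsoOfFin hcard).strictMono hij)
      have hmem2 : ∀ j, c j ∈ s := fun j => hsdef ▸ Finset.mem_image_of_mem c (Finset.mem_univ j)
      have hinj2 : Function.Injective
          (fun j => (s.orderIsoOfFin hcard).symm ⟨c j, hmem2 j⟩) := by
        intro i j hij
        exact hcinj (congrArg Subtype.val ((s.orderIsoOfFin hcard).symm.injective hij))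
      set σ : Equiv.Perm (Fin s₂) :=
        Equiv.ofBijective _ (Finite.injective_iff_bijective.1 hinj2) with hσ
      have hcc : ∀ j, c j = c₁ (σ j) := by
        intro j
        show c j = ((s.orderIsoOfFin hcard) ((s.orderIsoOfFin hcard).symm ⟨c j, hmem2 j⟩) : _)
        rw [OrderIso.apply_symm_apply]
      have hsub : (Matrix.of fun i j : Fin s₂ => Y ⟨i.val, hm2 i⟩ (a (c j))) =
          (Matrix.of fun i j : Fin s₂ => Y ⟨i.val, hm2 i⟩ (a (c₁ j))).submatrix id σ := by
        ext i j
        simp only [Matrix.of_apply, Matrix.submatrix_apply, id_eq]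
        rw [hcc j]
      rw [hsub, Matrix.det_permute']
      refine Ideal.mul_mem_left _ _ ?_
      rw [hIdef]
      refine Ideal.subset_span (Set.mem_union_left _ ⟨fun j => a (c₁ j), ha.comp hc₁mono, ?_⟩)
      congr 1
    · rw [Function.not_injective_iff] at hcinj
      obtain ⟨i, j, hij, hne⟩ := hcinj
      have hz : (Matrix.of fun i j : Fin s₂ => Y ⟨i.val, hm2 i⟩ (a (c j))).det = 0 := by
        rw [← Matrix.det_transpose]
        refine Matrix.det_zero_of_row_eq hne (funext fun p => ?_)
        simp only [Matrix.transpose_apply, Matrix.of_apply, hij]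
      rw [hz]
      exact Ideal.zero_mem _
  -- matrices over the quotient
  set Amat : ℕ → Matrix (Fin (s₁ + 1)) (Fin (s₁ + 1)) (R ⧸ I) := fun u =>
    Matrix.of fun p q => if p.val = 0 then xr (r - 1) q else if p.val < u then yrow (p.val - 1) q
      else if p.val = u then zr (p.val - 1) q else xr (p.val - 1) q with hA
  set D : ℕ → Matrix (Fin (s₁ + 1)) (Fin (s₁ + 1)) (R ⧸ I) := fun u =>
    Matrix.of fun p q => if p.val = 0 then zr (r - 1) q else if p.val < u then yrow (p.val - 1) q
      else xr (p.val - 1) q with hD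
  rw [map_sum]
  have hAmap : ∀ u ∈ Finset.Icc r s₂,
      φ ((Matrix.of fun p q : Fin (s₁ + 1) =>
        if p.val = 0 then X ⟨r - 1, by omega⟩ (a q)
        else if p.val < u then Y ⟨p.val - 1, by omega⟩ (a q)
        else if p.val = u then Z ⟨p.val - 1, by omega⟩ (a q)
        else X ⟨p.val - 1, by omega⟩ (a q)).det) = (Amat u).det := by
    intro u hu
    rw [Finset.mem_Icc] at hu
    rw [RingHom.map_det, RingHom.mapMatrix_apply]
    congr 1
    ext p q
    have hp : p.val < s₁ + 1 := p.isLt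
    simp only [Matrix.map_apply, Matrix.of_apply, hA]
    by_cases h0 : p.val = 0
    · simp only [if_pos h0, hxr, dif_pos (show r - 1 < m by omega)]
    · simp only [if_neg h0]
      by_cases h1 : p.val < u
      · simp only [if_pos h1, hyrow, dif_pos (show p.val - 1 < m by omega)]
      · simp only [if_neg h1]
        by_cases h2 : p.val = u
        · simp only [if_pos h2, hzr, dif_pos (show p.val - 1 < m by omega)]
        · simp only [if_neg h2, hxr, dif_pos (show p.val - 1 < m by omega)]
  rw [Finset.sum_congr rfl hAmap]
  have det_upd_sub : ∀ (N : Matrix (Fin (s₁+1)) (Fin (s₁+1)) (R ⧸ I)) (j : Fin (s₁+1))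
      (f g : Fin (s₁+1) → R ⧸ I),
      (N.updateRow j (fun q => f q - g q)).det = (N.updateRow j f).det - (N.updateRow j g).det := by
    intro N j f g
    have h1 : (fun q => f q - g q) = f + (-1 : R ⧸ I) • g := funext fun q => by
      simp [sub_eq_add_neg]
    rw [h1, Matrix.det_updateRow_add, Matrix.det_updateRow_smul]
    ring
  have hr_lt : r < s₁ + 1 := by omega
  have hne0gen : ∀ (v : ℕ) (hv : v < s₁ + 1), 1 ≤ v → ((⟨v, hv⟩ : Fin (s₁+1))) ≠ 0 := by
    intro v hv hv1 hh
    have := congrArg Fin.val hh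
    simp at this
    omega
  have hsplitgen : ∀ v : ℕ, (Amat v).det = ((Amat v).updateRow 0 (yrow (r-1))).det
      + ((Amat v).updateRow 0 (wr (r-1))).det := by
    intro v
    rw [← Matrix.det_updateRow_add]
    have h2 : (yrow (r-1) + wr (r-1)) = (Amat v) 0 := by
      funext q
      simp only [Pi.add_apply, hwr, hA, Matrix.of_apply]
      rw [if_pos (show ((0 : Fin (s₁+1))).val = 0 from rfl)]
      ring
    rw [h2, Matrix.updateRow_eq_self]
  have hrowugen : ∀ (v : ℕ) (hv : v < s₁ + 1), 1 ≤ v →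
      (Amat v) ⟨v, hv⟩ = fun q => zr (v-1) q := by
    intro v hv hv1
    funext q
    simp only [hA, Matrix.of_apply]
    rw [if_neg (show ¬(v = 0) by omega), if_neg (show ¬(v < v) by omega)]
    simp
  have hAu : ∀ u ∈ Finset.Icc r s₂, (Amat u).det =
      if u = r then -((D (r+1)).det) else (D u).det - (D (u+1)).det := by
    intro u hu
    rw [Finset.mem_Icc] at hu
    by_cases hur : u = r
    · rw [if_pos hur, hur, hsplitgen r]
      have hz2 : ((Amat r).updateRow 0 (wr (r-1))).det = 0 := by
        refine det_eq_zero_of_rowpair _ 0 ⟨r, hr_lt⟩ (Ne.symm (hne0gen r hr_lt hr1))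
          (fun c c' => ?_)
        have e0 : ((Amat r).updateRow 0 (wr (r-1))) 0 = wr (r-1) := Matrix.updateRow_self
        have eu : ((Amat r).updateRow 0 (wr (r-1))) ⟨r, hr_lt⟩ = fun q => zr (r-1) q := by
          rw [Matrix.updateRow_ne (hne0gen r hr_lt hr1), hrowugen r hr_lt hr1]
        rw [e0, eu]
        have h := hK (r-1) (r-1) (by omega) (by omega) c' c
        linear_combination h
      have hy2 : ((Amat r).updateRow 0 (yrow (r-1))) =
          (D (r+1)).submatrix (Equiv.swap 0 ⟨r, hr_lt⟩) id := by
        ext p q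
        have hp : p.val < s₁ + 1 := p.isLt
        simp only [Matrix.submatrix_apply, id_eq]
        by_cases h0 : p = 0
        · subst h0
          rw [Matrix.updateRow_self, Equiv.swap_apply_left]
          simp only [hD, Matrix.of_apply]
          rw [if_neg (show ¬(r = 0) by omega), if_pos (show r < r + 1 by omega)]
        · rw [Matrix.updateRow_ne h0]
          by_cases h1 : p = ⟨r, hr_lt⟩
          · subst h1
            rw [Equiv.swap_apply_right]
            simp only [hA, hD, Matrix.of_apply]
            rw [if_neg (show ¬(r = 0) by omega), if_neg (show ¬(r < r) by omega)]
            simp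
          · rw [Equiv.swap_apply_of_ne_of_ne h0 h1]
            have hpv0 : ¬ (p.val = 0) := fun hh => h0 (Fin.ext hh)
            have hpvu : ¬ (p.val = r) := fun hh => h1 (Fin.ext (by simp [hh]))
            simp only [hA, hD, Matrix.of_apply]
            rw [if_neg hpv0, if_neg hpv0]
            by_cases h2 : p.val < r
            · rw [if_pos h2, if_pos (by omega)]
            · rw [if_neg h2, if_neg hpvu, if_neg (by omega)]
      rw [hz2, hy2, Matrix.det_permute]
      have hsg : Equiv.Perm.sign (Equiv.swap (0 : Fin (s₁+1)) ⟨r, hr_lt⟩) = -1 :=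
        Equiv.Perm.sign_swap (Ne.symm (hne0gen r hr_lt hr1))
      rw [hsg]
      push_cast
      ring
    · rw [if_neg hur, hsplitgen u]
      have hu_lt : u < s₁ + 1 := by omega
      have hu1 : 1 ≤ u := by omega
      have hune0 := hne0gen u hu_lt hu1
      have hugt : r < u := by omega
      have hy0 : ((Amat u).updateRow 0 (yrow (r-1))).det = 0 := by
        refine Matrix.det_zero_of_row_eq (Ne.symm (hne0gen r hr_lt hr1)) ?_
        rw [Matrix.updateRow_self, Matrix.updateRow_ne (hne0gen r hr_lt hr1)]
        funext q
        simp only [hA, Matrix.of_apply]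
        rw [if_neg (show ¬(r = 0) by omega), if_pos (show r < u from hugt)]
      have hw : ((Amat u).updateRow 0 (wr (r-1))).det =
          ((D u).updateRow ⟨u, hu_lt⟩ (wr (u-1))).det := by
        refine det_eq_of_rowpair _ _ 0 ⟨u, hu_lt⟩ (Ne.symm hune0) (fun i hi0 hiu => ?_)
          (fun c c' => ?_)
        · rw [Matrix.updateRow_ne hi0, Matrix.updateRow_ne hiu]
          have hiv0 : ¬ (i.val = 0) := fun hh => hi0 (Fin.ext hh)
          have hivu : ¬ (i.val = u) := fun hh => hiu (Fin.ext (by simp [hh]))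
          funext q
          simp only [hA, hD, Matrix.of_apply]
          rw [if_neg hiv0, if_neg hiv0]
          by_cases h2 : i.val < u
          · rw [if_pos h2, if_pos h2]
          · rw [if_neg h2, if_neg h2, if_neg hivu]
        · rw [Matrix.updateRow_self, Matrix.updateRow_ne hune0,
            Matrix.updateRow_ne (Ne.symm hune0), Matrix.updateRow_self,
            hrowugen u hu_lt hu1]
          have hD0 : (D u) 0 = fun q => zr (r-1) q := by
            funext q
            simp only [hD, Matrix.of_apply]
            rw [if_pos (show ((0:Fin (s₁+1))).val = 0 from rfl)]
          rw [hD0]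
          have h := hK (r-1) (u-1) (by omega) (by omega) c c'
          linear_combination -h
      have hsub2 : ((D u).updateRow ⟨u, hu_lt⟩ (wr (u-1))).det = (D u).det - (D (u+1)).det := by
        have hwfun : (wr (u-1)) = fun q => xr (u-1) q - yrow (u-1) q := funext fun q => by
          simp only [hwr]
        rw [hwfun, det_upd_sub]
        have hx : (D u).updateRow ⟨u, hu_lt⟩ (fun q => xr (u-1) q) = D u := by
          have hrow : (fun q => xr (u-1) q) = (D u) ⟨u, hu_lt⟩ := by
            funext q
            simp only [hD, Matrix.of_apply]
            rw [if_neg (show ¬(u = 0) by omega), if_neg (show ¬(u < u) by omega)]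
          rw [hrow, Matrix.updateRow_eq_self]
        have hy : (D u).updateRow ⟨u, hu_lt⟩ (fun q => yrow (u-1) q) = D (u+1) := by
          ext p q
          by_cases h1 : p = ⟨u, hu_lt⟩
          · subst h1
            rw [Matrix.updateRow_self]
            simp only [hD, Matrix.of_apply]
            rw [if_neg (show ¬(u = 0) by omega), if_pos (show u < u + 1 by omega)]
          · rw [Matrix.updateRow_ne h1]
            have hpvu : ¬ (p.val = u) := fun hh => h1 (Fin.ext (by simp [hh]))
            simp only [hD, Matrix.of_apply]
            by_cases h0 : p.val = 0
            · rw [if_pos h0, if_pos h0]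
            · rw [if_neg h0, if_neg h0]
              by_cases h2 : p.val < u
              · rw [if_pos h2, if_pos (by omega)]
              · rw [if_neg h2, if_neg (by omega)]
        rw [hx, hy]
      rw [hy0, hw, hsub2, zero_add]
  rw [Finset.sum_congr rfl hAu]
  have hIcc : Finset.Icc r s₂ = insert r (Finset.Icc (r+1) s₂) := by
    ext x
    simp only [Finset.mem_Icc, Finset.mem_insert]
    omega
  rw [hIcc, Finset.sum_insert (fun hmem2 => by rw [Finset.mem_Icc] at hmem2; omega), if_pos rfl]
  have hrest : ∑ u ∈ Finset.Icc (r+1) s₂,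
      (if u = r then -((D (r+1)).det) else (D u).det - (D (u+1)).det)
      = (D (r+1)).det - (D (s₂+1)).det := by
    calc ∑ u ∈ Finset.Icc (r+1) s₂,
            (if u = r then -((D (r+1)).det) else (D u).det - (D (u+1)).det)
        = ∑ u ∈ Finset.Ico (r+1) (s₂+1), ((D u).det - (D (u+1)).det) := by
          rw [Finset.Ico_add_one_right_eq_Icc]
          exact Finset.sum_congr rfl (fun u hu => if_neg (by
            rw [Finset.mem_Icc] at hu; omega))
      _ = ∑ i ∈ Finset.range (s₂+1-(r+1)), ((D (r+1+i)).det - (D (r+1+i+1)).det) :=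
          Finset.sum_Ico_eq_sum_range _ _ _
      _ = (D (r+1)).det - (D (r+1+(s₂+1-(r+1)))).det :=
          Finset.sum_range_sub' (fun i => (D (r+1+i)).det) _
      _ = (D (r+1)).det - (D (s₂+1)).det := by
          have harg : r + 1 + (s₂ + 1 - (r + 1)) = s₂ + 1 := by omega
          rw [harg]
  rw [hrest]
  have hfinal : (D (s₂+1)).det = 0 := by
    refine det_eq_zero_of_rows (by omega) _ (fun i : Fin s₂ => yrow i.val) (fun i => ?_) ?_
    · funext q
      simp only [hD, Matrix.of_apply]
      rw [if_neg (show ¬(i.val + 1 = 0) by omega),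
        if_pos (show i.val + 1 < s₂ + 1 by omega)]
      rfl
    · intro c
      exact hminQ c
  rw [hfinal]
  ring
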